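/- Let \ell > 0 and b \ne 0 be integers satisfying \ell^2 + 4b \ge 0, and define the sequence s by s_0 = 0, s_1 = 1, s_n = \ell s_{n-1} + b s_{n-2} for n \ge 2. Then the s-lecture hall cone C_n^{(s)} is Gorenstein for all n \ge 0 if and only if b = -1. Moreover, if b \ne -1, there exists n_0 = n_0(b, \ell) such that C_n^{(s)} fails to be Gorenstein for all n \ge n_0. -/

import Mathlib

noncomputable section

open scoped Classical

/-- The set of integer lattice points in `ℝ^n`. -/
def intLattice (n : ℕ) : Set (Fin n → ℝ) :=
  Set.range (fun (m : Fin n → ℤ) => fun i => (m i : ℝ))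

/-- `c` is a Gorenstein point of `C`: an integer point in the interior of `C`
with `C° ∩ ℤ^n = c + (C ∩ ℤ^n)`. -/
def IsGorensteinPoint {n : ℕ} (C : Set (Fin n → ℝ)) (c : Fin n → ℝ) : Prop :=
  c ∈ interior C ∧ c ∈ intLattice n ∧
    interior C ∩ intLattice n = (fun x => c + x) '' (C ∩ intLattice n)

/-- A cone is Gorenstein if it has a Gorenstein point. -/
def IsGorensteinCone {n : ℕ} (C : Set (Fin n → ℝ)) : Prop :=
  ∃ c, IsGorensteinPoint C c

/-- The `s`-lecture hall cone `{λ : 0 ≤ λ₁/s₁ ≤ λ₂/s₂ ≤ ⋯ ≤ λₙ/sₙ}`,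
where coordinate `i : Fin n` corresponds to the mathematical index `i+1`. -/
def lhCone (n : ℕ) (s : ℕ → ℤ) : Set (Fin n → ℝ) :=
  {x | (∀ i : Fin n, (i : ℕ) = 0 → 0 ≤ x i / (s 1 : ℝ)) ∧
       (∀ i j : Fin n, (j : ℕ) = (i : ℕ) + 1 →
          x i / (s ((i : ℕ) + 1) : ℝ) ≤ x j / (s ((j : ℕ) + 1) : ℝ))}

/-- The `s`-lecture hall partitions of length `n`: integer points of the cone. -/
def lhPartitions (n : ℕ) (s : ℕ → ℤ) : Set (Fin n → ℤ) :=
  {lam | (fun i => (lam i : ℝ)) ∈ lhCone n s}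

/-- The generating function `f_n^{(s)}(q) = ∑_{λ ∈ L_n^{(s)}} q^{|λ|}` as a power series. -/
def lhGenFun (n : ℕ) (s : ℕ → ℤ) : PowerSeries ℚ :=
  PowerSeries.mk fun m =>
    (Set.ncard {lam : Fin n → ℤ | lam ∈ lhPartitions n s ∧ ∑ i, lam i = (m : ℤ)} : ℚ)

/-- A rational function `r(q)` is self-reciprocal if `r(1/q) = ± q^k r(q)`
for some nonnegative integer `k`. -/
def SelfReciprocalRat (r : RatFunc ℚ) : Prop :=
  ∃ k : ℕ, RatFunc.eval (algebraMap ℚ (RatFunc ℚ)) (RatFunc.X)⁻¹ r = RatFunc.X ^ k * r ∨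
           RatFunc.eval (algebraMap ℚ (RatFunc ℚ)) (RatFunc.X)⁻¹ r = -(RatFunc.X ^ k * r)

/-- A power series is self-reciprocal as a rational function: it is the power series
expansion of a rational function `H/D` (with `D(0) ≠ 0`) which is self-reciprocal. -/
def GenFunSelfReciprocal (f : PowerSeries ℚ) : Prop :=
  ∃ H D : Polynomial ℚ, D.coeff 0 ≠ 0 ∧
    (↑H : PowerSeries ℚ) = f * (↑D : PowerSeries ℚ) ∧
    SelfReciprocalRat (algebraMap (Polynomial ℚ) (RatFunc ℚ) H /
      algebraMap (Polynomial ℚ) (RatFunc ℚ) D)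


section AuxLH

variable {s : ℕ → ℤ}

lemma mem_lhCone_iff (hs1 : s 1 = 1) (hpos : ∀ j : ℕ, (0:ℤ) < s (j+1)) {n : ℕ} (x : Fin n → ℝ) :
    x ∈ lhCone n s ↔ ((∀ i : Fin n, (i : ℕ) = 0 → 0 ≤ x i) ∧
      ∀ i j : Fin n, (j : ℕ) = (i : ℕ) + 1 →
        (s ((i:ℕ)+2) : ℝ) * x i ≤ (s ((i:ℕ)+1) : ℝ) * x j) := by
  have hpR : ∀ j : ℕ, (0:ℝ) < (s (j+1) : ℝ) := fun j => by exact_mod_cast hpos j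
  constructor
  · rintro ⟨h1, h2⟩
    refine ⟨fun i hi => ?_, fun i j hj => ?_⟩
    · have := h1 i hi
      rw [hs1] at this
      simpa using this
    · have := h2 i j hj
      rw [hj] at this
      rw [div_le_div_iff₀ (hpR _) (hpR _)] at this
      -- this : x i * s (i+1+1) ≤ x j * s (i+1)
      have e : (s ((i:ℕ)+1+1) : ℝ) = (s ((i:ℕ)+2) : ℝ) := rfl
      calc (s ((i:ℕ)+2) : ℝ) * x i = x i * (s ((i:ℕ)+1+1) : ℝ) := by rw [e]; ring
        _ ≤ x j * (s ((i:ℕ)+1) : ℝ) := this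
        _ = (s ((i:ℕ)+1) : ℝ) * x j := by ring
  · rintro ⟨h1, h2⟩
    refine ⟨fun i hi => ?_, fun i j hj => ?_⟩
    · rw [hs1]
      have := h1 i hi
      simpa using this
    · rw [hj, div_le_div_iff₀ (hpR _) (hpR _)]
      have := h2 i j hj
      have e : (s ((i:ℕ)+1+1) : ℝ) = (s ((i:ℕ)+2) : ℝ) := rfl
      rw [e]
      calc x i * (s ((i:ℕ)+2) : ℝ) = (s ((i:ℕ)+2) : ℝ) * x i := by ring
        _ ≤ (s ((i:ℕ)+1) : ℝ) * x j := this
        _ = x j * (s ((i:ℕ)+1) : ℝ) := by ring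

lemma coe_mem_lhCone_iff (hs1 : s 1 = 1) (hpos : ∀ j : ℕ, (0:ℤ) < s (j+1)) {n : ℕ}
    (m : Fin n → ℤ) :
    (fun i => (m i : ℝ)) ∈ lhCone n s ↔ ((∀ i : Fin n, (i : ℕ) = 0 → 0 ≤ m i) ∧
      ∀ i j : Fin n, (j : ℕ) = (i : ℕ) + 1 →
        s ((i:ℕ)+2) * m i ≤ s ((i:ℕ)+1) * m j) := by
  rw [mem_lhCone_iff hs1 hpos]
  constructor
  · rintro ⟨h1, h2⟩
    exact ⟨fun i hi => by exact_mod_cast h1 i hi, fun i j hj => by exact_mod_cast h2 i j hj⟩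
  · rintro ⟨h1, h2⟩
    exact ⟨fun i hi => by exact_mod_cast h1 i hi, fun i j hj => by exact_mod_cast h2 i j hj⟩

lemma interior_of_strict (hs1 : s 1 = 1) (hpos : ∀ j : ℕ, (0:ℤ) < s (j+1)) {n : ℕ}
    (x : Fin n → ℝ)
    (h0 : ∀ i : Fin n, (i : ℕ) = 0 → 0 < x i)
    (hstep : ∀ i j : Fin n, (j : ℕ) = (i : ℕ) + 1 →
      (s ((i:ℕ)+2) : ℝ) * x i < (s ((i:ℕ)+1) : ℝ) * x j) :
    x ∈ interior (lhCone n s) := by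
  set U : Set (Fin n → ℝ) := ⋂ i : Fin n, ({y : Fin n → ℝ | (i : ℕ) = 0 → 0 < y i} ∩
      ⋂ j : Fin n, {y : Fin n → ℝ | (j : ℕ) = (i : ℕ) + 1 →
        (s ((i:ℕ)+2) : ℝ) * y i < (s ((i:ℕ)+1) : ℝ) * y j}) with hU
  have hUopen : IsOpen U := by
    refine isOpen_iInter_of_finite fun i => IsOpen.inter ?_ (isOpen_iInter_of_finite fun j => ?_)
    · by_cases hi : (i : ℕ) = 0
      · have : {y : Fin n → ℝ | (i : ℕ) = 0 → 0 < y i} = {y : Fin n → ℝ | 0 < y i} := by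
          ext y; simp [hi]
        rw [this]
        exact isOpen_lt continuous_const (continuous_apply i)
      · have : {y : Fin n → ℝ | (i : ℕ) = 0 → 0 < y i} = Set.univ := by
          ext y; simp [hi]
        rw [this]; exact isOpen_univ
    · by_cases hj : (j : ℕ) = (i : ℕ) + 1
      · have : {y : Fin n → ℝ | (j : ℕ) = (i : ℕ) + 1 →
            (s ((i:ℕ)+2) : ℝ) * y i < (s ((i:ℕ)+1) : ℝ) * y j}
            = {y : Fin n → ℝ | (s ((i:ℕ)+2) : ℝ) * y i < (s ((i:ℕ)+1) : ℝ) * y j} := by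
          ext y; simp [hj]
        rw [this]
        exact isOpen_lt (continuous_const.mul (continuous_apply i))
          (continuous_const.mul (continuous_apply j))
      · have : {y : Fin n → ℝ | (j : ℕ) = (i : ℕ) + 1 →
            (s ((i:ℕ)+2) : ℝ) * y i < (s ((i:ℕ)+1) : ℝ) * y j} = Set.univ := by
          ext y; simp [hj]
        rw [this]; exact isOpen_univ
  have hxU : x ∈ U := by
    rw [hU]
    refine Set.mem_iInter.mpr fun i => ⟨h0 i, Set.mem_iInter.mpr fun j => hstep i j⟩
  have hsub : U ⊆ lhCone n s := by
    intro y hy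
    rw [hU, Set.mem_iInter] at hy
    rw [mem_lhCone_iff hs1 hpos]
    refine ⟨fun i hi => le_of_lt ((hy i).1 hi), fun i j hj => le_of_lt ?_⟩
    have := (hy i).2
    rw [Set.mem_iInter] at this
    exact this j hj
  exact interior_maximal hsub hUopen hxU

lemma strict_of_interior (hs1 : s 1 = 1) (hpos : ∀ j : ℕ, (0:ℤ) < s (j+1)) {n : ℕ}
    (x : Fin n → ℝ) (hx : x ∈ interior (lhCone n s)) :
    (∀ i : Fin n, (i : ℕ) = 0 → 0 < x i) ∧
      ∀ i j : Fin n, (j : ℕ) = (i : ℕ) + 1 →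
        (s ((i:ℕ)+2) : ℝ) * x i < (s ((i:ℕ)+1) : ℝ) * x j := by
  have hnh : lhCone n s ∈ nhds x :=
    Filter.mem_of_superset (isOpen_interior.mem_nhds hx) interior_subset
  rcases Metric.mem_nhds_iff.mp hnh with ⟨ε, hε, hball⟩
  have hpR : ∀ j : ℕ, (0:ℝ) < (s (j+1) : ℝ) := fun j => by exact_mod_cast hpos j
  constructor
  · intro i hi
    have hmem : Function.update x i (x i - ε/2) ∈ lhCone n s := by
      apply hball
      rw [Metric.mem_ball, dist_pi_lt_iff hε]
      intro c
      rcases eq_or_ne c i with rfl | hc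
      · rw [Function.update_self, Real.dist_eq]
        have he : x c - ε/2 - x c = -(ε/2) := by ring
        rw [he, abs_neg, abs_of_pos (half_pos hε)]
        linarith
      · rw [Function.update_of_ne hc]
        simpa using hε
    have h1 := ((mem_lhCone_iff hs1 hpos _).mp hmem).1 i hi
    rw [Function.update_self] at h1
    linarith
  · intro i j hj
    have hij : j ≠ i := by
      intro h; rw [h] at hj; omega
    have hmem : Function.update x i (x i + ε/2) ∈ lhCone n s := by
      apply hball
      rw [Metric.mem_ball, dist_pi_lt_iff hε]
      intro c
      rcases eq_or_ne c i with rfl | hc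
      · rw [Function.update_self, Real.dist_eq]
        have he : x c + ε/2 - x c = ε/2 := by ring
        rw [he, abs_of_pos (half_pos hε)]
        linarith
      · rw [Function.update_of_ne hc]
        simpa using hε
    have h1 := ((mem_lhCone_iff hs1 hpos _).mp hmem).2 i j hj
    rw [Function.update_self, Function.update_of_ne hij] at h1
    have hc : 0 < (s ((i:ℕ)+2) : ℝ) * (ε/2) := mul_pos (hpR _) (half_pos hε)
    nlinarith

lemma coe_interior_of_strict (hs1 : s 1 = 1) (hpos : ∀ j : ℕ, (0:ℤ) < s (j+1)) {n : ℕ}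
    (m : Fin n → ℤ)
    (h0 : ∀ i : Fin n, (i : ℕ) = 0 → 0 < m i)
    (hstep : ∀ i j : Fin n, (j : ℕ) = (i : ℕ) + 1 →
      s ((i:ℕ)+2) * m i < s ((i:ℕ)+1) * m j) :
    (fun i => (m i : ℝ)) ∈ interior (lhCone n s) :=
  interior_of_strict hs1 hpos _ (fun i hi => by exact_mod_cast h0 i hi)
    (fun i j hj => by exact_mod_cast hstep i j hj)

lemma coe_strict_of_interior (hs1 : s 1 = 1) (hpos : ∀ j : ℕ, (0:ℤ) < s (j+1)) {n : ℕ}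
    (m : Fin n → ℤ) (hm : (fun i => (m i : ℝ)) ∈ interior (lhCone n s)) :
    (∀ i : Fin n, (i : ℕ) = 0 → 0 < m i) ∧
      ∀ i j : Fin n, (j : ℕ) = (i : ℕ) + 1 →
        s ((i:ℕ)+2) * m i < s ((i:ℕ)+1) * m j := by
  obtain ⟨h1, h2⟩ := strict_of_interior hs1 hpos _ hm
  exact ⟨fun i hi => by exact_mod_cast h1 i hi, fun i j hj => by exact_mod_cast h2 i j hj⟩

end AuxLH



def gseq (s : ℕ → ℤ) (i : ℕ) : ℤ := (Int.gcd (s (i+1)) (s (i+2)) : ℤ)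

def deepSeq (s : ℕ → ℤ) : ℕ → ℤ
  | 0 => 1
  | j+1 => s (j+2) * deepSeq s j + 1

def tailSeq (s : ℕ → ℤ) (k : ℕ) : ℕ → ℤ
  | 0 => s (k+2) * deepSeq s k
  | m+1 => s (k+m+3) * tailSeq s k m + 1

def qSeq (s : ℕ → ℤ) (k j : ℕ) : ℤ :=
  if j ≤ k then s (k+1) * deepSeq s j else tailSeq s k (j - (k+1))

section SeqLemmas

variable {s : ℕ → ℤ}

lemma gseq_dvd_left (i : ℕ) : gseq s i ∣ s (i+1) := Int.gcd_dvd_left _ _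
lemma gseq_dvd_right (i : ℕ) : gseq s i ∣ s (i+2) := Int.gcd_dvd_right _ _

lemma gseq_pos (hpos : ∀ j : ℕ, (0:ℤ) < s (j+1)) (i : ℕ) : 1 ≤ gseq s i := by
  have hne : s (i+1) ≠ 0 := ne_of_gt (hpos i)
  have h : Int.gcd (s (i+1)) (s (i+2)) ≠ 0 := fun hh => hne (Int.gcd_eq_zero_iff.mp hh).1
  unfold gseq
  exact_mod_cast Nat.one_le_iff_ne_zero.mpr h

lemma deepSeq_pos (hpos : ∀ j : ℕ, (0:ℤ) < s (j+1)) : ∀ j, 1 ≤ deepSeq s j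
  | 0 => le_refl 1
  | j+1 => by
      have h1 := deepSeq_pos hpos j
      have h2 : 0 < s (j+2) := hpos (j+1)
      show 1 ≤ s (j+2) * deepSeq s j + 1
      nlinarith

lemma deepSeq_step (hpos : ∀ j : ℕ, (0:ℤ) < s (j+1)) (j : ℕ) :
    s (j+2) * deepSeq s j < s (j+1) * deepSeq s (j+1) := by
  have h1 := deepSeq_pos hpos j
  have h2 : 0 < s (j+1) := hpos j
  have h3 : 0 < s (j+2) := hpos (j+1)
  have he : deepSeq s (j+1) = s (j+2) * deepSeq s j + 1 := rfl
  rw [he]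
  have h4 : (0:ℤ) ≤ (s (j+1) - 1) * (s (j+2) * deepSeq s j) :=
    mul_nonneg (by linarith) (by nlinarith)
  nlinarith

lemma tailSeq_pos (hpos : ∀ j : ℕ, (0:ℤ) < s (j+1)) (k : ℕ) : ∀ m, 1 ≤ tailSeq s k m
  | 0 => by
      have h1 := deepSeq_pos hpos k
      have h2 : 0 < s (k+2) := hpos (k+1)
      show 1 ≤ s (k+2) * deepSeq s k
      nlinarith
  | m+1 => by
      have h1 := tailSeq_pos hpos k m
      have h2 : 0 < s (k+m+3) := hpos (k+m+2)
      show 1 ≤ s (k+m+3) * tailSeq s k m + 1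
      nlinarith

lemma qSeq_pos (hpos : ∀ j : ℕ, (0:ℤ) < s (j+1)) (k : ℕ) : ∀ j, 1 ≤ qSeq s k j := by
  intro j
  unfold qSeq
  split_ifs with h
  · have h1 := deepSeq_pos hpos j
    have h2 : 0 < s (k+1) := hpos k
    nlinarith
  · exact tailSeq_pos hpos k _

lemma qSeq_step_eq (k : ℕ) :
    s (k+2) * qSeq s k k = s (k+1) * qSeq s k (k+1) := by
  unfold qSeq
  rw [if_pos (le_refl k), if_neg (by omega : ¬ k+1 ≤ k)]
  have e : k + 1 - (k+1) = 0 := by omega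
  rw [e]
  show s (k+2) * (s (k+1) * deepSeq s k) = s (k+1) * (s (k+2) * deepSeq s k)
  ring

lemma qSeq_step_ne (hpos : ∀ j : ℕ, (0:ℤ) < s (j+1)) (k j : ℕ) (hne : j ≠ k) :
    s (j+2) * qSeq s k j < s (j+1) * qSeq s k (j+1) := by
  rcases lt_or_gt_of_ne hne with hlt | hgt
  · unfold qSeq
    rw [if_pos (by omega : j ≤ k), if_pos (by omega : j+1 ≤ k)]
    have h := deepSeq_step hpos j
    have hk1 : 0 < s (k+1) := hpos k
    nlinarith
  · obtain ⟨m, rfl⟩ : ∃ m, j = k+1+m := ⟨j - (k+1), by omega⟩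
    unfold qSeq
    rw [if_neg (by omega), if_neg (by omega)]
    have e1 : k+1+m - (k+1) = m := by omega
    have e2 : k+1+m+1 - (k+1) = m+1 := by omega
    rw [e1, e2]
    have ht : tailSeq s k (m+1) = s (k+m+3) * tailSeq s k m + 1 := rfl
    rw [ht]
    have e3 : k+1+m+2 = k+m+3 := by omega
    have e4 : k+1+m+1 = k+m+2 := by omega
    rw [e3, e4]
    have h1 := tailSeq_pos hpos k m
    have h2 : 0 < s (k+m+2) := hpos (k+m+1)
    have h3 : 0 < s (k+m+3) := hpos (k+m+2)
    have h4 : (0:ℤ) ≤ (s (k+m+2) - 1) * (s (k+m+3) * tailSeq s k m) :=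
      mul_nonneg (by linarith) (by nlinarith)
    nlinarith

lemma qSeq_zero (k : ℕ) : qSeq s k 0 = s (k+1) := by
  unfold qSeq
  rw [if_pos (Nat.zero_le k)]
  show s (k+1) * deepSeq s 0 = s (k+1)
  show s (k+1) * 1 = s (k+1)
  ring

end SeqLemmas

section NT

variable {ℓ b : ℤ} {s : ℕ → ℤ}

lemma casor (hs0 : s 0 = 0) (hs1 : s 1 = 1)
    (hrec' : ∀ k : ℕ, s (k+2) = ℓ * s (k+1) + b * s k) :
    ∀ j : ℕ, s (j+1) * s (j+1) - s (j+2) * s j = (-b)^j := by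
  intro j
  induction j with
  | zero => rw [hs0, hs1]; ring
  | succ j ih =>
      have e1 : s (j+3) = ℓ * s (j+2) + b * s (j+1) := hrec' (j+1)
      have e2 : s (j+2) = ℓ * s (j+1) + b * s j := hrec' j
      show s (j+2) * s (j+2) - s (j+3) * s (j+1) = (-b)^(j+1)
      have hp : (-b)^(j+1) = (-b)^j * (-b) := pow_succ _ _
      rw [hp, ← ih, e1, e2]
      ring

lemma descent_false (hb : b ≠ 0) (hs0 : s 0 = 0) (hpos : ∀ j : ℕ, (0:ℤ) < s (j+1))
    (hrec' : ∀ k : ℕ, s (k+2) = ℓ * s (k+1) + b * s k)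
    {i j : ℕ} (hij : i < j) (hcross : s (i+2) * s (j+1) = s (j+2) * s (i+1)) : False := by
  set d := j - i with hd
  have hjd : j = i + d := by omega
  have claim : ∀ m k, k + m = i + 2 → s k * s (j+1) = s (k + d) * s (i+1) := by
    intro m
    induction m using Nat.strong_induction_on with
    | _ m ih =>
      intro k hk
      match m, ih with
      | 0, _ =>
          have hk2 : k = i + 2 := by omega
          subst hk2
          have e : i + 2 + d = j + 2 := by omega
          rw [e]
          exact hcross
      | 1, _ =>
          have hk2 : k = i + 1 := by omega
          subst hk2
          have e : i + 1 + d = j + 1 := by omega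
          rw [e]
          ring
      | (m'+2), ih =>
          have h1 := ih (m'+1) (by omega) (k+1) (by omega)
          have h2 := ih m' (by omega) (k+2) (by omega)
          have e1 : k + 1 + d = k + d + 1 := by omega
          have e2 : k + 2 + d = k + d + 2 := by omega
          rw [e1] at h1
          rw [e2] at h2
          have r1 : s (k+2) = ℓ * s (k+1) + b * s k := hrec' k
          have r2 : s (k+d+2) = ℓ * s (k+d+1) + b * s (k+d) := hrec' (k+d)
          have hmul : b * (s k * s (j+1)) = b * (s (k + d) * s (i+1)) := by
            linear_combination h2 - ℓ * h1 - s (j+1) * r1 + s (i+1) * r2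
          exact mul_left_cancel₀ hb hmul
  have hfin := claim (i+2) 0 (by omega)
  rw [hs0] at hfin
  have h0d : (0:ℕ) + d = d := by omega
  rw [h0d] at hfin
  have hsd : 0 < s d := by
    have := hpos (d - 1)
    have e : d - 1 + 1 = d := by omega
    rwa [e] at this
  have hsi : 0 < s (i+1) := hpos i
  nlinarith [hfin]

/-- The key number-theoretic lemma: if `s (i+2)` always divides
`g (i+1) + b * g i`, then `b = -1`. -/
lemma keyNT (hℓ : 0 < ℓ) (hb : b ≠ 0) (hbne : b ≠ -1)
    (hs0 : s 0 = 0) (hs1 : s 1 = 1)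
    (hpos : ∀ j : ℕ, (0:ℤ) < s (j+1))
    (hmono : ∀ j : ℕ, s (j+1) ≤ s (j+2))
    (hrec' : ∀ k : ℕ, s (k+2) = ℓ * s (k+1) + b * s k)
    (hdvd : ∀ i : ℕ, s (i+2) ∣ (gseq s (i+1) + b * gseq s i)) : False := by
  -- common apparatus
  set u : ℕ → ℤ := fun i => s (i+1) / gseq s i with hu
  set w : ℕ → ℤ := fun i => s (i+2) / gseq s i with hw
  have hgu : ∀ i, gseq s i * u i = s (i+1) := fun i => Int.mul_ediv_cancel' (gseq_dvd_left i)
  have hgw : ∀ i, gseq s i * w i = s (i+2) := fun i => Int.mul_ediv_cancel' (gseq_dvd_right i)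
  have hg1 : ∀ i, 1 ≤ gseq s i := gseq_pos hpos
  have hu1 : ∀ i, 1 ≤ u i := by
    intro i
    by_contra hcon
    push_neg at hcon
    have h1 := hgu i
    have h2 := hpos i
    have h3 := hg1 i
    nlinarith
  have huw : ∀ i, u i ≤ w i := by
    intro i
    have h1 := hgu i
    have h2 := hgw i
    have h3 := hmono i
    have h4 := hg1 i
    nlinarith
  have crossFalse : ∀ i j : ℕ, i < j → u i = u j → w i = w j → False := by
    intro i j hij h1 h2
    apply descent_false hb hs0 hpos hrec' hij
    calc s (i+2) * s (j+1) = (gseq s i * w i) * (gseq s j * u j) := by rw [hgw, hgu]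
      _ = (gseq s j * w j) * (gseq s i * u i) := by rw [← h1, ← h2]; ring
      _ = s (j+2) * s (i+1) := by rw [hgw, hgu]
  have hcase : 1 ≤ b ∨ b ≤ -2 := by omega
  rcases hcase with hbpos | hbneg
  · -- b ≥ 1 : all pairs (u i, w i) lie in a finite box
    have hwle : ∀ i, w i ≤ 2 * b := by
      intro i
      have hd1 : gseq s (i+1) ∣ gseq s (i+1) + b * gseq s i :=
        dvd_trans (gseq_dvd_left (i+1)) (hdvd i)
      have hd2 : gseq s (i+1) ∣ b * gseq s i := by
        have := dvd_sub hd1 (dvd_refl (gseq s (i+1)))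
        simpa using this
      have hle2 : gseq s (i+1) ≤ b * gseq s i :=
        Int.le_of_dvd (by nlinarith [hg1 i]) hd2
      have hle1 : s (i+2) ≤ gseq s (i+1) + b * gseq s i :=
        Int.le_of_dvd (by nlinarith [hg1 i, hg1 (i+1)]) (hdvd i)
      have h2 : s (i+2) ≤ 2 * b * gseq s i := by linarith
      have h3 := hgw i
      have h4 := hg1 i
      nlinarith
    have hmem : ∀ i : ℕ, (u i, w i) ∈ Set.Icc ((1:ℤ), (1:ℤ)) (2*b, 2*b) := by
      intro i
      rw [Set.mem_Icc]
      constructor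
      · exact Prod.mk_le_mk.mpr ⟨hu1 i, le_trans (hu1 i) (huw i)⟩
      · exact Prod.mk_le_mk.mpr ⟨le_trans (huw i) (hwle i), hwle i⟩
    have hSfin : (Set.Icc ((1:ℤ), (1:ℤ)) (2*b, 2*b)).Finite := Set.finite_Icc _ _
    haveI := hSfin.to_subtype
    obtain ⟨i, j, hne, heq⟩ := Finite.exists_ne_map_eq_of_infinite
      (fun i : ℕ => (⟨(u i, w i), hmem i⟩ : ↥(Set.Icc ((1:ℤ), (1:ℤ)) (2*b, 2*b))))
    have heq' : (u i, w i) = (u j, w j) := congrArg Subtype.val heq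
    obtain ⟨h1, h2⟩ := Prod.ext_iff.mp heq'
    rcases hne.lt_or_gt with h | h
    · exact crossFalse i j h h1 h2
    · exact crossFalse j i h h1.symm h2.symm
  · -- b ≤ -2
    obtain ⟨B, rfl⟩ : ∃ B : ℤ, b = -B := ⟨-b, by ring⟩
    have hB : 2 ≤ B := by omega
    have hdvd' : ∀ i : ℕ, s (i+2) ∣ (gseq s (i+1) - B * gseq s i) := by
      intro i
      have := hdvd i
      have e : gseq s (i+1) + (-B) * gseq s i = gseq s (i+1) - B * gseq s i := by ring
      rwa [e] at this
    set T : Set ℕ := {i | gseq s (i+1) ≠ B * gseq s i} with hT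
    have hTbound : ∀ i ∈ T, w i ≤ B ∧ u i ≤ B := by
      intro i hiT
      have hne : gseq s (i+1) - B * gseq s i ≠ 0 := fun h => hiT (by linarith [sub_eq_zero.mp h])
      have habs : s (i+2) ≤ |gseq s (i+1) - B * gseq s i| :=
        Int.le_of_dvd (abs_pos.mpr hne) ((dvd_abs _ _).mpr (hdvd' i))
      have hup : gseq s (i+1) ≤ s (i+2) := Int.le_of_dvd (hpos (i+1)) (gseq_dvd_left (i+1))
      have hlt : gseq s (i+1) - B * gseq s i < s (i+2) := by nlinarith [hg1 i]
      have hneg : gseq s (i+1) - B * gseq s i ≤ -(s (i+2)) := by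
        rcases abs_cases (gseq s (i+1) - B * gseq s i) with ⟨he, _⟩ | ⟨he, _⟩
        · rw [he] at habs; linarith
        · rw [he] at habs; linarith
      have hwB : w i ≤ B := by
        have h3 := hgw i
        have h4 := hg1 i
        have h5 := hg1 (i+1)
        nlinarith
      exact ⟨hwB, le_trans (huw i) hwB⟩
    by_cases hTinf : T.Infinite
    · haveI := hTinf.to_subtype
      have hmem : ∀ t : ↥T, (u (t:ℕ), w (t:ℕ)) ∈ Set.Icc ((1:ℤ), (1:ℤ)) (B, B) := by
        intro t
        obtain ⟨hwB, huB⟩ := hTbound (t:ℕ) t.2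
        rw [Set.mem_Icc]
        exact ⟨Prod.mk_le_mk.mpr ⟨hu1 _, le_trans (hu1 _) (huw _)⟩,
          Prod.mk_le_mk.mpr ⟨huB, hwB⟩⟩
      have hSfin : (Set.Icc ((1:ℤ), (1:ℤ)) (B, B)).Finite := Set.finite_Icc _ _
      haveI := hSfin.to_subtype
      obtain ⟨t1, t2, hne, heq⟩ := Finite.exists_ne_map_eq_of_infinite
        (fun t : ↥T => (⟨(u (t:ℕ), w (t:ℕ)), hmem t⟩ : ↥(Set.Icc ((1:ℤ), (1:ℤ)) (B, B))))
      have heq' : (u (t1:ℕ), w (t1:ℕ)) = (u (t2:ℕ), w (t2:ℕ)) := congrArg Subtype.val heq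
      obtain ⟨h1, h2⟩ := Prod.ext_iff.mp heq'
      have hne' : (t1:ℕ) ≠ (t2:ℕ) := fun h => hne (Subtype.ext h)
      rcases hne'.lt_or_gt with h | h
      · exact crossFalse _ _ h h1 h2
      · exact crossFalse _ _ h h1.symm h2.symm
    · -- T finite: eventually gseq s (i+1) = B * gseq s i
      have hTfin : T.Finite := Set.not_infinite.mp hTinf
      obtain ⟨I0, hI0⟩ := hTfin.bddAbove
      set I := I0 + 1 with hI
      have hall : ∀ i, I ≤ i → gseq s (i+1) = B * gseq s i := by
        intro i hi
        by_contra h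
        have : i ∈ T := h
        have := hI0 this
        omega
      have hpow : ∀ m : ℕ, gseq s (I + m) = B^m * gseq s I := by
        intro m
        induction m with
        | zero => simp
        | succ m ih =>
            have h1 : gseq s (I + m + 1) = B * gseq s (I + m) := hall (I + m) (by omega)
            have e : I + (m + 1) = I + m + 1 := by omega
            rw [e, h1, ih]
            ring
      -- divisibility bounds
      have hdv : ∀ m : ℕ, (B:ℤ)^m ∣ gseq s (I + m) := by
        intro m
        rw [hpow m]
        exact Dvd.intro _ rfl
      have dv2 : (B:ℤ)^(I+2) ∣ s (2*I+3) := by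
        have h1 := hdv (I+2)
        have e : I + (I+2) = 2*I+2 := by omega
        rw [e] at h1
        exact dvd_trans h1 (gseq_dvd_left (2*I+2))
      have dv3 : (B:ℤ)^(I+3) ∣ s (2*I+4) := by
        have h1 := hdv (I+3)
        have e : I + (I+3) = 2*I+3 := by omega
        rw [e] at h1
        exact dvd_trans h1 (gseq_dvd_left (2*I+3))
      have dv1 : (B:ℤ)^(I+1) ∣ s (2*I+2) := by
        have h1 := hdv (I+1)
        have e : I + (I+1) = 2*I+1 := by omega
        rw [e] at h1
        exact dvd_trans h1 (gseq_dvd_left (2*I+1))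
      have hcas := casor hs0 hs1 hrec' (2*I+2)
      have hBposz : (0:ℤ) < B := by omega
      have hBB : (-(-B) : ℤ) = B := by ring
      rw [hBB] at hcas
      -- hcas : s (2I+3) * s (2I+3) - s (2I+4) * s (2I+2) = B^(2I+2)
      have hd1 : (B:ℤ)^(2*I+4) ∣ s (2*I+3) * s (2*I+3) := by
        have e : (B:ℤ)^(2*I+4) = B^(I+2) * B^(I+2) := by
          rw [← pow_add]; congr 1; omega
        rw [e]
        exact mul_dvd_mul dv2 dv2
      have hd2 : (B:ℤ)^(2*I+4) ∣ s (2*I+4) * s (2*I+2) := by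
        have e : (B:ℤ)^(2*I+4) = B^(I+3) * B^(I+1) := by
          rw [← pow_add]; congr 1; omega
        rw [e]
        exact mul_dvd_mul dv3 dv1
      have hd3 : (B:ℤ)^(2*I+4) ∣ (B:ℤ)^(2*I+2) := by
        rw [← hcas]
        exact dvd_sub hd1 hd2
      have hle := Int.le_of_dvd (pow_pos hBposz _) hd3
      have he : (B:ℤ)^(2*I+4) = B^(2*I+2) * B^2 := by rw [← pow_add]
      have hp1 : (0:ℤ) < B^(2*I+2) := pow_pos hBposz _
      have hB2 : (4:ℤ) ≤ B^2 := by nlinarith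
      have h5 : B^(2*I+2) * 4 ≤ B^(2*I+2) * B^2 :=
        mul_le_mul_of_nonneg_left hB2 (le_of_lt hp1)
      nlinarith [hle, he, hp1]

end NT

section Extraction

variable {ℓ b : ℤ} {s : ℕ → ℤ}

lemma gor_eqs (hs1 : s 1 = 1) (hpos : ∀ j : ℕ, (0:ℤ) < s (j+1)) {n : ℕ}
    (hgor : IsGorensteinCone (lhCone n s)) :
    ∃ m : Fin n → ℤ, ∀ (k : ℕ) (hk : k + 1 < n),
      s (k+1) * m ⟨k+1, hk⟩ - s (k+2) * m ⟨k, Nat.lt_of_succ_lt hk⟩ = gseq s k := by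
  obtain ⟨c, hcI, hcL, hcEq⟩ := hgor
  obtain ⟨mc, hmc⟩ := hcL
  refine ⟨mc, ?_⟩
  intro k hk
  have hk' : k < n := Nat.lt_of_succ_lt hk
  -- Bezout coefficients
  set α : ℤ := -(Int.gcdB (s (k+1)) (s (k+2))) with hα
  set β : ℤ := Int.gcdA (s (k+1)) (s (k+2)) with hβ
  have hBez : s (k+1) * β - s (k+2) * α = gseq s k := by
    have h := Int.gcd_eq_gcd_ab (s (k+1)) (s (k+2))
    show s (k+1) * β - s (k+2) * α = ((Int.gcd (s (k+1)) (s (k+2)) : ℤ))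
    rw [hα, hβ]
    linarith [h]
  set d : ℕ → ℤ := fun j => if j = k then α else if j = k+1 then β else 0 with hd
  have hdabs : ∀ j, |d j| ≤ |α| + |β| := by
    intro j
    simp only [hd]
    split_ifs <;> simp <;> linarith [abs_nonneg α, abs_nonneg β]
  set M : ℤ := ∑ t ∈ Finset.range (n+3), (|s t| + 1) with hM
  have hM0 : 0 ≤ M := Finset.sum_nonneg fun t _ => by positivity
  have hpair : ∀ j : ℕ, j + 1 < n → |s (j+1)| + |s (j+2)| ≤ M := by
    intro j hj
    have hsub : ({j+1, j+2} : Finset ℕ) ⊆ Finset.range (n+3) := by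
      intro t ht
      simp only [Finset.mem_insert, Finset.mem_singleton] at ht
      rcases ht with rfl | rfl <;> (apply Finset.mem_range.mpr; omega)
    have h2 := Finset.sum_le_sum_of_subset_of_nonneg hsub
      (fun t _ _ => by positivity : ∀ t ∈ Finset.range (n+3), t ∉ ({j+1, j+2} : Finset ℕ) → (0:ℤ) ≤ |s t| + 1)
    rw [Finset.sum_pair (by omega : j+1 ≠ j+2)] at h2
    rw [hM]
    linarith
  set N : ℤ := 1 + |α| + (|α| + |β|) * M with hN
  have hNbig : 1 + |α| ≤ N := by
    have : 0 ≤ (|α| + |β|) * M := mul_nonneg (by positivity) hM0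
    rw [hN]; linarith
  have hN1 : (1:ℤ) ≤ N := by linarith [abs_nonneg α]
  set z : ℕ → ℤ := fun j => N * qSeq s k j + d j with hz
  have hq1 : ∀ j, 1 ≤ qSeq s k j := qSeq_pos hpos k
  have hz0 : ∀ i : Fin n, (i : ℕ) = 0 → 0 < z (i : ℕ) := by
    intro i hi
    rw [hi]
    have h1 : N * 1 ≤ N * qSeq s k 0 := mul_le_mul_of_nonneg_left (hq1 0) (by linarith)
    have h2 : -|α| ≤ d 0 := by
      by_cases h0k : 0 = k
      · simp only [hd, if_pos h0k]
        exact neg_abs_le α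
      · have he : d 0 = 0 := by
          simp only [hd, if_neg h0k, if_neg (by omega : ¬ (0:ℕ) = k+1)]
        rw [he]
        linarith [abs_nonneg α]
    show 0 < N * qSeq s k 0 + d 0
    linarith
  have hzk : s (k+1) * z (k+1) - s (k+2) * z k = gseq s k := by
    have hq := qSeq_step_eq (s := s) k
    have hdk : d k = α := by simp [hd]
    have hdk1 : d (k+1) = β := by simp [hd]
    show s (k+1) * (N * qSeq s k (k+1) + d (k+1)) - s (k+2) * (N * qSeq s k k + d k) = gseq s k
    rw [hdk, hdk1]
    linear_combination hBez - N * hq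
  have hzs : ∀ j : ℕ, j + 1 < n → s (j+2) * z j < s (j+1) * z (j+1) := by
    intro j hj
    by_cases hjk : j = k
    · subst hjk
      have hg : 1 ≤ gseq s j := gseq_pos hpos j
      linarith [hzk]
    · have hq := qSeq_step_ne hpos k j hjk
      have h1 : 1 ≤ s (j+1) * qSeq s k (j+1) - s (j+2) * qSeq s k j := by linarith
      have habs1 : |s (j+1) * d (j+1) - s (j+2) * d j| ≤ (|α| + |β|) * M := by
        calc |s (j+1) * d (j+1) - s (j+2) * d j|
            ≤ |s (j+1) * d (j+1)| + |s (j+2) * d j| := by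
              rw [sub_eq_add_neg]
              refine (abs_add_le _ _).trans ?_
              rw [abs_neg]
          _ = |s (j+1)| * |d (j+1)| + |s (j+2)| * |d j| := by rw [abs_mul, abs_mul]
          _ ≤ |s (j+1)| * (|α|+|β|) + |s (j+2)| * (|α|+|β|) := by
              exact add_le_add (mul_le_mul_of_nonneg_left (hdabs _) (abs_nonneg _))
                (mul_le_mul_of_nonneg_left (hdabs _) (abs_nonneg _))
          _ = (|s (j+1)| + |s (j+2)|) * (|α|+|β|) := by ring
          _ ≤ M * (|α|+|β|) := mul_le_mul_of_nonneg_right (hpair j hj) (by positivity)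
          _ = (|α|+|β|) * M := mul_comm _ _
      have hds : -((|α|+|β|) * M) ≤ s (j+1) * d (j+1) - s (j+2) * d j := (abs_le.mp habs1).1
      have hmul : N * 1 ≤ N * (s (j+1) * qSeq s k (j+1) - s (j+2) * qSeq s k j) :=
        mul_le_mul_of_nonneg_left h1 (by linarith)
      have hexp : s (j+1) * z (j+1) - s (j+2) * z j =
          N * (s (j+1) * qSeq s k (j+1) - s (j+2) * qSeq s k j) +
            (s (j+1) * d (j+1) - s (j+2) * d j) := by
        show s (j+1) * (N * qSeq s k (j+1) + d (j+1)) - s (j+2) * (N * qSeq s k j + d j) = _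
        ring
      linarith [abs_nonneg α, abs_nonneg β]
  -- z gives an interior lattice point
  have hzint : (fun i : Fin n => ((z (i : ℕ) : ℤ) : ℝ)) ∈ interior (lhCone n s) := by
    apply coe_interior_of_strict hs1 hpos
    · exact hz0
    · intro i j hj
      have hlt : (i:ℕ) + 1 < n := by rw [← hj]; exact j.isLt
      have := hzs (i:ℕ) hlt
      rw [hj]
      exact this
  have hmem : (fun i : Fin n => ((z (i : ℕ) : ℤ) : ℝ)) ∈
      interior (lhCone n s) ∩ intLattice n := ⟨hzint, ⟨fun i => z (i : ℕ), rfl⟩⟩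
  rw [hcEq] at hmem
  obtain ⟨xx, ⟨hxC, hxL⟩, hxeq⟩ := hmem
  obtain ⟨mx, hmx⟩ := hxL
  have hzi : ∀ i : Fin n, mc i + mx i = z (i : ℕ) := by
    intro i
    have h := congrFun hxeq i
    rw [← hmc, ← hmx] at h
    have h2 : ((mc i : ℝ)) + ((mx i : ℝ)) = ((z (i:ℕ) : ℤ) : ℝ) := h
    exact_mod_cast h2
  have h1 : mc ⟨k+1, hk⟩ + mx ⟨k+1, hk⟩ = z (k+1) := hzi ⟨k+1, hk⟩
  have h2 : mc ⟨k, hk'⟩ + mx ⟨k, hk'⟩ = z k := hzi ⟨k, hk'⟩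
  have hxw : s (k+2) * mx ⟨k, hk'⟩ ≤ s (k+1) * mx ⟨k+1, hk⟩ := by
    have hmx' : (fun i : Fin n => ((mx i : ℝ))) = xx := hmx
    have h := (coe_mem_lhCone_iff hs1 hpos mx).mp (by rw [hmx']; exact hxC)
    exact h.2 ⟨k, hk'⟩ ⟨k+1, hk⟩ rfl
  have hcs : s (k+2) * mc ⟨k, hk'⟩ < s (k+1) * mc ⟨k+1, hk⟩ := by
    have hmc' : (fun i : Fin n => ((mc i : ℝ))) = c := hmc
    have h := coe_strict_of_interior hs1 hpos mc (by rw [hmc']; exact hcI)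
    exact h.2 ⟨k, hk'⟩ ⟨k+1, hk⟩ rfl
  have hGdvd : gseq s k ∣ s (k+1) * mc ⟨k+1, hk⟩ - s (k+2) * mc ⟨k, hk'⟩ :=
    dvd_sub ((gseq_dvd_left k).mul_right _) ((gseq_dvd_right k).mul_right _)
  have hsum : (s (k+1) * mc ⟨k+1, hk⟩ - s (k+2) * mc ⟨k, hk'⟩) +
      (s (k+1) * mx ⟨k+1, hk⟩ - s (k+2) * mx ⟨k, hk'⟩) = gseq s k := by
    linear_combination hzk + s (k+1) * h1 - s (k+2) * h2
  have hFpos : 0 < s (k+1) * mc ⟨k+1, hk⟩ - s (k+2) * mc ⟨k, hk'⟩ := by linarith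
  have hFge := Int.le_of_dvd hFpos hGdvd
  have hFle : s (k+1) * mc ⟨k+1, hk⟩ - s (k+2) * mc ⟨k, hk'⟩ ≤ gseq s k := by linarith
  linarith

end Extraction

section Sufficiency

variable {ℓ b : ℤ} {s : ℕ → ℤ}

lemma gor_of_neg_one (hs0 : s 0 = 0) (hs1 : s 1 = 1)
    (hpos : ∀ j : ℕ, (0:ℤ) < s (j+1))
    (hcas : ∀ j : ℕ, s (j+1) * s (j+1) - s (j+2) * s j = 1) (n : ℕ) :
    IsGorensteinCone (lhCone n s) := by
  refine ⟨fun i : Fin n => ((s (i:ℕ) + s ((i:ℕ)+1) : ℤ) : ℝ), ?_, ?_, ?_⟩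
  · -- interior
    apply coe_interior_of_strict hs1 hpos (fun i : Fin n => s (i:ℕ) + s ((i:ℕ)+1))
    · intro i hi
      show 0 < s (i:ℕ) + s ((i:ℕ)+1)
      rw [hi, hs0, hs1]
      norm_num
    · intro i j hj
      show s ((i:ℕ)+2) * (s (i:ℕ) + s ((i:ℕ)+1)) < s ((i:ℕ)+1) * (s (j:ℕ) + s ((j:ℕ)+1))
      rw [hj]
      linarith [hcas (i:ℕ)]
  · exact ⟨fun i : Fin n => s (i:ℕ) + s ((i:ℕ)+1), rfl⟩
  · ext x
    constructor
    · rintro ⟨hxI, mx, rfl⟩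
      have strict := coe_strict_of_interior hs1 hpos mx hxI
      refine ⟨fun i : Fin n => ((mx i - (s (i:ℕ) + s ((i:ℕ)+1)) : ℤ) : ℝ),
        ⟨?_, ⟨fun i : Fin n => mx i - (s (i:ℕ) + s ((i:ℕ)+1)), rfl⟩⟩, ?_⟩
      · apply (coe_mem_lhCone_iff hs1 hpos _).mpr
        constructor
        · intro i hi
          show 0 ≤ mx i - (s (i:ℕ) + s ((i:ℕ)+1))
          have h1 := strict.1 i hi
          rw [hi, hs0, hs1]
          omega
        · intro i j hj
          show s ((i:ℕ)+2) * (mx i - (s (i:ℕ) + s ((i:ℕ)+1))) ≤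
            s ((i:ℕ)+1) * (mx j - (s (j:ℕ) + s ((j:ℕ)+1)))
          have h1 := strict.2 i j hj
          have h3 : s ((i:ℕ)+2) * mx i + 1 ≤ s ((i:ℕ)+1) * mx j := Int.add_one_le_iff.mpr h1
          rw [hj]
          linarith [hcas (i:ℕ)]
      · show (fun y => _ + y) _ = _
        funext i
        show ((s (i:ℕ) + s ((i:ℕ)+1) : ℤ) : ℝ) + ((mx i - (s (i:ℕ) + s ((i:ℕ)+1)) : ℤ) : ℝ)
          = ((mx i : ℤ) : ℝ)
        push_cast
        ring
    · rintro ⟨y, ⟨hyC, my, rfl⟩, rfl⟩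
      have hyW := (coe_mem_lhCone_iff hs1 hpos my).mp hyC
      have hrw : (fun i : Fin n => ((s (i:ℕ) + s ((i:ℕ)+1) : ℤ) : ℝ)) +
          (fun i : Fin n => ((my i : ℤ) : ℝ)) =
          fun i : Fin n => ((s (i:ℕ) + s ((i:ℕ)+1) + my i : ℤ) : ℝ) := by
        funext i
        show ((s (i:ℕ) + s ((i:ℕ)+1) : ℤ) : ℝ) + ((my i : ℤ) : ℝ) = _
        push_cast
        ring
      constructor
      · show (fun y => _ + y) _ ∈ interior (lhCone n s)
        have hb : (fun y => (fun i : Fin n => ((s (i:ℕ) + s ((i:ℕ)+1) : ℤ) : ℝ)) + y)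
            (fun i : Fin n => ((my i : ℤ) : ℝ)) =
            fun i : Fin n => ((s (i:ℕ) + s ((i:ℕ)+1) + my i : ℤ) : ℝ) := hrw
        rw [hb]
        apply coe_interior_of_strict hs1 hpos (fun i : Fin n => s (i:ℕ) + s ((i:ℕ)+1) + my i)
        · intro i hi
          show 0 < s (i:ℕ) + s ((i:ℕ)+1) + my i
          have h1 := hyW.1 i hi
          rw [hi, hs0, hs1]
          omega
        · intro i j hj
          show s ((i:ℕ)+2) * (s (i:ℕ) + s ((i:ℕ)+1) + my i) <
            s ((i:ℕ)+1) * (s (j:ℕ) + s ((j:ℕ)+1) + my j)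
          have h1 := hyW.2 i j hj
          rw [hj]
          linarith [hcas (i:ℕ)]
      · show (fun y => _ + y) _ ∈ intLattice n
        have hb : (fun y => (fun i : Fin n => ((s (i:ℕ) + s ((i:ℕ)+1) : ℤ) : ℝ)) + y)
            (fun i : Fin n => ((my i : ℤ) : ℝ)) =
            fun i : Fin n => ((s (i:ℕ) + s ((i:ℕ)+1) + my i : ℤ) : ℝ) := hrw
        rw [hb]
        exact ⟨fun i : Fin n => s (i:ℕ) + s ((i:ℕ)+1) + my i, rfl⟩

end Sufficiency


/-- With `ℓ > 0`, `b ≠ 0`, `ℓ² + 4b ≥ 0`, and `s` defined by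
`s₀ = 0`, `s₁ = 1`, `sₙ = ℓ s_{n-1} + b s_{n-2}`: the `s`-lecture hall cone
`C_n^{(s)}` is Gorenstein for all `n ≥ 0` iff `b = -1`; and if `b ≠ -1` there is
`n₀ = n₀(b, ℓ)` such that `C_n^{(s)}` fails to be Gorenstein for all `n ≥ n₀`. -/
theorem stmt15 (ℓ b : ℤ) (hℓ : 0 < ℓ) (hb : b ≠ 0) (hD : 0 ≤ ℓ ^ 2 + 4 * b)
    (s : ℕ → ℤ) (hs0 : s 0 = 0) (hs1 : s 1 = 1)
    (hrec : ∀ j, 2 ≤ j → s j = ℓ * s (j - 1) + b * s (j - 2)) :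
    ((∀ n : ℕ, IsGorensteinCone (lhCone n s)) ↔ b = -1) ∧
    (b ≠ -1 → ∃ n₀ : ℕ, ∀ n, n₀ ≤ n → ¬ IsGorensteinCone (lhCone n s)) := by
  have hrec' : ∀ k : ℕ, s (k+2) = ℓ * s (k+1) + b * s k := by
    intro k
    have h := hrec (k+2) (by omega)
    have e1 : k+2-1 = k+1 := by omega
    have e2 : k+2-2 = k := by omega
    rw [e1, e2] at h
    exact h
  have key : ∀ j : ℕ, 0 < s (j+1) ∧ ℓ * s (j+1) ≤ 2 * s (j+2) := by
    intro j
    induction j with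
    | zero =>
        have h2 : s 2 = ℓ := by
          have := hrec' 0
          rw [hs0, hs1] at this
          linarith
        rw [hs1, h2]
        constructor
        · norm_num
        · linarith
    | succ j ih =>
        obtain ⟨h1, h2⟩ := ih
        have hl1 : 1 ≤ ℓ := hℓ
        have hs2 : 0 < s (j+2) := by nlinarith
        refine ⟨hs2, ?_⟩
        have hr := hrec' (j+1)
        rcases le_or_gt 0 b with hb0 | hb0
        · have : 0 ≤ b * s (j+1) := mul_nonneg hb0 (le_of_lt h1)
          rw [hr]
          nlinarith
        · have p1 : 2*b*(2*s (j+2)) ≤ 2*b*(ℓ*s (j+1)) :=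
            mul_le_mul_of_nonpos_left h2 (by linarith)
          have p2 : 0 ≤ (ℓ^2 + 4*b) * s (j+2) := mul_nonneg hD (le_of_lt hs2)
          have hgoal : ℓ * (ℓ * s (j+2)) ≤ ℓ * (2 * s (j+3)) := by
            rw [hr]
            nlinarith
          exact le_of_mul_le_mul_left hgoal hℓ
  have hpos : ∀ j : ℕ, (0:ℤ) < s (j+1) := fun j => (key j).1
  have hmono : ∀ j : ℕ, s (j+1) ≤ s (j+2) := by
    intro j
    rcases le_or_gt 1 b with hb1 | hb1
    · have hr := hrec' j
      have hs0' : 0 ≤ s j := by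
        cases j with
        | zero => rw [hs0]
        | succ j => exact le_of_lt (hpos j)
      nlinarith [hpos j]
    · have hbneg : b ≤ -1 := by omega
      have hl2 : 2 ≤ ℓ := by nlinarith
      have := (key j).2
      nlinarith [hpos j]
  have hcasor := casor (ℓ := ℓ) (b := b) hs0 hs1 hrec'
  have extract : ∀ (i n : ℕ), i + 3 ≤ n → IsGorensteinCone (lhCone n s) →
      s (i+2) ∣ (gseq s (i+1) + b * gseq s i) := by
    intro i n hin hgor
    obtain ⟨m, hm⟩ := gor_eqs hs1 hpos hgor
    have hk1 : i + 1 < n := by omega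
    have hk2 : i + 2 < n := by omega
    have E1 := hm i hk1
    have E2 : s (i+2) * m ⟨i+2, hk2⟩ - s (i+3) * m ⟨i+1, Nat.lt_of_succ_lt hk2⟩
        = gseq s (i+1) := hm (i+1) hk2
    have hproof : (⟨i+1, Nat.lt_of_succ_lt hk2⟩ : Fin n) = ⟨i+1, hk1⟩ := rfl
    refine ⟨m ⟨i+2, hk2⟩ - ℓ * m ⟨i+1, hk1⟩ - b * m ⟨i, Nat.lt_of_succ_lt hk1⟩, ?_⟩
    have e3 : s (i+3) = ℓ * s (i+2) + b * s (i+1) := hrec' (i+1)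
    have E2' : s (i+2) * m ⟨i+2, hk2⟩ - s (i+3) * m ⟨i+1, hk1⟩ = gseq s (i+1) := E2
    linear_combination -E2' - b * E1 - (m ⟨i+1, hk1⟩) * e3
  have keyNTa : (∀ i : ℕ, s (i+2) ∣ (gseq s (i+1) + b * gseq s i)) → b = -1 := by
    intro hdvd
    by_contra hbne
    exact keyNT hℓ hb hbne hs0 hs1 hpos hmono hrec' hdvd
  have suff : b = -1 → ∀ n, IsGorensteinCone (lhCone n s) := by
    intro hbn n
    apply gor_of_neg_one hs0 hs1 hpos
    intro j
    have := hcasor j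
    rw [hbn] at this
    simpa using this
  constructor
  · constructor
    · intro hall
      apply keyNTa
      intro i
      exact extract i (i+3) le_rfl (hall (i+3))
    · intro hbn
      exact suff hbn
  · intro hbne
    have hnd : ¬ (∀ i : ℕ, s (i+2) ∣ (gseq s (i+1) + b * gseq s i)) :=
      fun h => hbne (keyNTa h)
    push_neg at hnd
    obtain ⟨i0, hi0⟩ := hnd
    exact ⟨i0 + 3, fun n hn hg => hi0 (extract i0 n hn hg)⟩
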